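/- arXiv:1311.4969 — 5 statements merged into one kernel-verified Lean document; each statement's English description precedes it below -/
import Mathlib

section
/- Let (Ω, 𝓕, μ) be a probability space, 𝓖 ⊆ 𝓕 a sub-σ-algebra, and let r, τ ∈ ℝ. Let S : Ω → ℝ be a nonnegative integrable random variable, let S' be a 𝓖-measurable random variable satisfying E[e^{−rτ}·S | 𝓖] = S' almost surely, let X be a nonnegative integrable 𝓖-measurable random variable, and let c ∈ ℝ. Then almost surely E[e^{−rτ}·(X + S − c)⁺ | 𝓖] = 1_{{X < c}} · E[e^{−rτ}·(S − (c − X))⁺ | 𝓖] + 1_{{X ≥ c}} · (S' + e^{−rτ}·(X − c)). -/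
open MeasureTheory

theorem terminal_conditioning_step
    {Ω : Type*} {mΩ : MeasurableSpace Ω} {μ : Measure Ω} [IsProbabilityMeasure μ]
    {m : MeasurableSpace Ω} (hm : m ≤ mΩ) (r τ : ℝ)
    (S S' X : Ω → ℝ) (c : ℝ)
    (hS_nonneg : ∀ ω, 0 ≤ S ω) (hS_int : Integrable S μ)
    (hS'_meas : StronglyMeasurable[m] S')
    (hS' : (μ[fun ω => Real.exp (-(r * τ)) * S ω | m]) =ᵐ[μ] S')
    (hX_nonneg : ∀ ω, 0 ≤ X ω) (hX_int : Integrable X μ)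
    (hX_meas : StronglyMeasurable[m] X) :
    (μ[fun ω => Real.exp (-(r * τ)) * max (X ω + S ω - c) 0 | m]) =ᵐ[μ]
      fun ω =>
        ({ω' | X ω' < c}.indicator (fun _ => (1 : ℝ)) ω) *
            (μ[fun ω' => Real.exp (-(r * τ)) * max (S ω' - (c - X ω')) 0 | m]) ω
          + ({ω' | c ≤ X ω'}.indicator (fun _ => (1 : ℝ)) ω) *
              (S' ω + Real.exp (-(r * τ)) * (X ω - c)) := by
  set E := Real.exp (-(r * τ)) with hE
  have hEpos : 0 < E := Real.exp_pos _
  set A : Set Ω := {ω | X ω < c} with hA_def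
  set B : Set Ω := {ω | c ≤ X ω} with hB_def
  have hA : MeasurableSet[m] A := hX_meas.measurable measurableSet_Iio
  have hB : MeasurableSet[m] B := hX_meas.measurable measurableSet_Ici
  set ind1 : Ω → ℝ := A.indicator (fun _ => (1 : ℝ)) with hind1_def
  set ind2 : Ω → ℝ := B.indicator (fun _ => (1 : ℝ)) with hind2_def
  have hind1 : StronglyMeasurable[m] ind1 := stronglyMeasurable_const.indicator hA
  have hind2 : StronglyMeasurable[m] ind2 := stronglyMeasurable_const.indicator hB
  set g1 : Ω → ℝ := fun ω => E * max (S ω - (c - X ω)) 0 with hg1_def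
  set g2 : Ω → ℝ := fun ω => E * S ω + E * (X ω - c) with hg2_def
  -- integrability of g1
  have hA' : MeasurableSet[mΩ] A := hm A hA
  have hB' : MeasurableSet[mΩ] B := hm B hB
  have hg1_meas : AEStronglyMeasurable[mΩ] g1 μ := by
    apply AEStronglyMeasurable.const_mul
    exact (hS_int.1.sub (aestronglyMeasurable_const.sub hX_int.1)).sup
      aestronglyMeasurable_const
  have hg1_int : Integrable g1 μ := by
    have hb : Integrable (fun ω => E * (S ω + X ω + |c|)) μ :=
      ((hS_int.add hX_int).add (integrable_const _)).const_mul E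
    refine hb.mono' ?_ ?_
    · exact hg1_meas
    · filter_upwards with ω
      have h1 : max (S ω - (c - X ω)) 0 ≤ S ω + X ω + |c| := by
        apply max_le <;>
          nlinarith [abs_nonneg c, neg_abs_le c, hS_nonneg ω, hX_nonneg ω]
      have h0 : 0 ≤ max (S ω - (c - X ω)) 0 := le_max_right _ _
      rw [Real.norm_eq_abs, abs_of_nonneg (by positivity)]
      exact mul_le_mul_of_nonneg_left h1 hEpos.le
  have hg2_int : Integrable g2 μ :=
    (hS_int.const_mul E).add ((hX_int.sub (integrable_const c)).const_mul E)
  -- products with indicators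
  have h1eq : ind1 * g1 = A.indicator g1 := by
    ext ω; by_cases h : ω ∈ A <;>
      simp [hind1_def, Set.indicator, h]
  have h2eq : ind2 * g2 = B.indicator g2 := by
    ext ω; by_cases h : ω ∈ B <;>
      simp [hind2_def, Set.indicator, h]
  have hind_bd : ∀ (s : Set Ω) (ω : Ω), ‖s.indicator (fun _ => (1:ℝ)) ω‖ ≤ 1 := by
    intro s ω; by_cases h : ω ∈ s <;> simp [Set.indicator, h]
  have h1_int : Integrable (ind1 * g1) μ := by
    refine hg1_int.mono (((hind1.mono hm).aestronglyMeasurable).mul hg1_meas) ?_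
    filter_upwards with ω
    rw [Pi.mul_apply, norm_mul]
    exact mul_le_of_le_one_left (norm_nonneg _) (hind_bd A ω)
  have h2_int : Integrable (ind2 * g2) μ := by
    refine hg2_int.mono (((hind2.mono hm).aestronglyMeasurable).mul hg2_int.1) ?_
    filter_upwards with ω
    rw [Pi.mul_apply, norm_mul]
    exact mul_le_of_le_one_left (norm_nonneg _) (hind_bd B ω)
  -- pointwise identity
  have key : (fun ω => E * max (X ω + S ω - c) 0) = ind1 * g1 + ind2 * g2 := by
    funext ω
    by_cases h : X ω < c
    · have hA1 : ω ∈ A := h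
      have hB0 : ω ∉ B := by simp [hB_def, not_le.mpr h]
      simp only [Pi.add_apply, Pi.mul_apply, hind1_def, hind2_def,
        Set.indicator_of_mem hA1, Set.indicator_of_notMem hB0, hg1_def]
      ring_nf
    · push_neg at h
      have hA0 : ω ∉ A := by simp [hA_def, not_lt.mpr h]
      have hB1 : ω ∈ B := h
      simp only [Pi.add_apply, Pi.mul_apply, hind1_def, hind2_def,
        Set.indicator_of_mem hB1, Set.indicator_of_notMem hA0, hg2_def]
      have hmax : max (X ω + S ω - c) 0 = X ω + S ω - c :=
        max_eq_left (by have := hS_nonneg ω; linarith)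
      rw [hmax]; ring
  -- condexp computations
  have hsum : μ[ind1 * g1 + ind2 * g2 | m] =ᵐ[μ] μ[ind1 * g1 | m] + μ[ind2 * g2 | m] :=
    condExp_add h1_int h2_int m
  have hc1 : μ[ind1 * g1 | m] =ᵐ[μ] ind1 * μ[g1 | m] :=
    condExp_mul_of_stronglyMeasurable_left hind1 h1_int hg1_int
  have hc2 : μ[ind2 * g2 | m] =ᵐ[μ] ind2 * μ[g2 | m] :=
    condExp_mul_of_stronglyMeasurable_left hind2 h2_int hg2_int
  have hg2c : μ[g2 | m] =ᵐ[μ] fun ω => S' ω + E * (X ω - c) := by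
    have hadd : μ[g2 | m] =ᵐ[μ]
        μ[fun ω => E * S ω | m] + μ[fun ω => E * (X ω - c) | m] :=
      condExp_add (hS_int.const_mul E) ((hX_int.sub (integrable_const c)).const_mul E) m
    have hx : μ[fun ω => E * (X ω - c) | m] = fun ω => E * (X ω - c) :=
      condExp_of_stronglyMeasurable hm
        ((hX_meas.sub stronglyMeasurable_const).const_mul E)
        ((hX_int.sub (integrable_const c)).const_mul E)
    filter_upwards [hadd, hS'] with ω h₁ h₂
    rw [h₁, Pi.add_apply, hx, h₂]
  rw [key]
  filter_upwards [hsum, hc1, hc2, hg2c.mono fun ω h => h] with ω h₁ h₂ h₃ h₄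
  have h₄' : ind2 ω * (μ[g2 | m]) ω = ind2 ω * (S' ω + E * (X ω - c)) := by rw [h₄]
  rw [h₁, Pi.add_apply, h₂, h₃, Pi.mul_apply, Pi.mul_apply, h₄']
end

section
/- Let (Ω, 𝓕, μ) be a probability space, let S : Ω → (0, ∞) be a random variable, let α > 0 satisfy E[S^{α+1}] < ∞, and let r, τ ≥ 0. Define z : ℝ → ℝ by z(k) = e^{αk} · E[e^{−rτ}·(S − e^k)⁺]. Then for every v ∈ ℝ the function k ↦ e^{ivk}·z(k) is integrable on ℝ, and ∫_ℝ e^{ivk}·z(k) dk = e^{−rτ} · E[S^{α+1+iv}] / ((α + iv)·(α + 1 + iv)), where S^{α+1+iv} := exp((α + 1 + iv)·log S) ∈ ℂ and the denominator equals α² + α − v² + i(2α+1)v. -/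
open MeasureTheory Complex

open Set Filter in
lemma cm_integrableOn_exp_mul_Iic {b : ℝ} (hb : 0 < b) (L : ℝ) :
    IntegrableOn (fun x : ℝ => Real.exp (b * x)) (Iic L) := by
  have hcont : Continuous fun x : ℝ => Real.exp (b * x) :=
    Real.continuous_exp.comp (continuous_const.mul continuous_id)
  refine integrableOn_Iic_of_intervalIntegral_norm_bounded (Real.exp (b * L) / b) L
    (fun y => hcont.integrableOn_Ioc) tendsto_id ?_
  refine Eventually.of_forall fun y => ?_
  have h1 : ∀ x : ℝ, ‖Real.exp (b * x)‖ = Real.exp (b * x) := fun x =>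
    Real.norm_of_nonneg (Real.exp_pos _).le
  simp only [h1, id_eq]
  rw [intervalIntegral.integral_comp_mul_left (fun x => Real.exp x) hb.ne']
  simp only [id_eq, smul_eq_mul, integral_exp]
  rw [div_eq_inv_mul]
  have := (Real.exp_pos (b * y)).le
  have hbi : (0:ℝ) ≤ b⁻¹ := (inv_pos.2 hb).le
  nlinarith [mul_nonneg hbi this]

open Set Filter in
lemma cm_integral_exp_mul_Iic {b : ℝ} (hb : 0 < b) (L : ℝ) :
    ∫ x in Iic L, Real.exp (b * x) = Real.exp (b * L) / b := by
  have D : ∀ x : ℝ, HasDerivAt (fun y : ℝ => Real.exp (b * y) / b) (Real.exp (b * x)) x := by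
    intro x
    have h1 : HasDerivAt (fun y : ℝ => Real.exp (b * y)) (Real.exp (b * x) * b) x :=
      (Real.hasDerivAt_exp _).comp x (by simpa using (hasDerivAt_id x).const_mul b)
    have := h1.div_const b
    rwa [mul_div_cancel_right₀ _ hb.ne'] at this
  have htend : Tendsto (fun y : ℝ => Real.exp (b * y) / b) atBot (nhds 0) := by
    have h2 : Tendsto (fun y : ℝ => b * y) atBot atBot :=
      (tendsto_const_mul_atBot_of_pos hb).2 tendsto_id
    simpa using (Real.tendsto_exp_atBot.comp h2).div_const b
  have := integral_Iic_of_hasDerivAt_of_tendsto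
    (f := fun y : ℝ => Real.exp (b * y) / b) (f' := fun x : ℝ => Real.exp (b * x))
    (a := L) (m := 0)
    ((Real.continuous_exp.comp (continuous_const.mul continuous_id)).div_const b).continuousWithinAt
    (fun x _ => D x) (cm_integrableOn_exp_mul_Iic hb L) htend
  simpa using this

open Set Filter in
lemma cm_integrableOn_cexp_Iic {c : ℂ} (hc : 0 < c.re) (L : ℝ) :
    IntegrableOn (fun x : ℝ => Complex.exp (c * x)) (Iic L) := by
  have hnorm : ∀ x : ℝ, ‖Complex.exp (c * x)‖ = Real.exp (c.re * x) := by
    intro x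
    rw [Complex.norm_exp]
    congr 1
    simp [Complex.mul_re]
  refine (cm_integrableOn_exp_mul_Iic hc L).mono' ?_ ?_
  · exact (Complex.continuous_exp.comp
      (continuous_const.mul Complex.continuous_ofReal)).aestronglyMeasurable
  · exact Eventually.of_forall fun x => le_of_eq (hnorm x)

open Set Filter in
lemma cm_integral_cexp_Iic {c : ℂ} (hc : 0 < c.re) (L : ℝ) :
    ∫ x in Iic L, Complex.exp (c * x) = Complex.exp (c * L) / c := by
  have hc0 : c ≠ 0 := fun h => by simp [h] at hc
  have D : ∀ x : ℝ, HasDerivAt (fun y : ℝ => Complex.exp (c * y) / c)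
      (Complex.exp (c * x)) x := by
    intro x
    conv => congr
    rw [← mul_div_cancel_right₀ (Complex.exp (c * x)) hc0]
    apply ((Complex.hasDerivAt_exp _).comp x _).div_const c
    simpa only [mul_one, id_eq] using ((hasDerivAt_id (x : ℂ)).const_mul c).comp_ofReal
  have htend : Tendsto (fun y : ℝ => Complex.exp (c * y) / c) atBot (nhds 0) := by
    rw [tendsto_zero_iff_norm_tendsto_zero]
    have h2 : Tendsto (fun y : ℝ => c.re * y) atBot atBot :=
      (tendsto_const_mul_atBot_of_pos hc).2 tendsto_id
    have h3 : Tendsto (fun y : ℝ => Real.exp (c.re * y) / ‖c‖) atBot (nhds 0) := by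
      simpa using (Real.tendsto_exp_atBot.comp h2).div_const ‖c‖
    refine h3.congr fun y => ?_
    rw [norm_div, Complex.norm_exp]
    congr 2
    simp [Complex.mul_re]
  have := integral_Iic_of_hasDerivAt_of_tendsto
    (f := fun y : ℝ => Complex.exp (c * y) / c) (f' := fun x : ℝ => Complex.exp (c * x))
    (a := L) (m := 0)
    ((Complex.continuous_exp.comp
      (continuous_const.mul Complex.continuous_ofReal)).div_const c).continuousWithinAt
    (fun x _ => D x) (cm_integrableOn_cexp_Iic hc L) htend
  simpa using this

open Set Filter in
lemma cm_key {c : ℂ} (hc : 0 < c.re) {s : ℝ} (hs : 0 < s) :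
    Integrable (fun k : ℝ => Complex.exp (c * k) * ((max (s - Real.exp k) 0 : ℝ) : ℂ)) ∧
    (∫ k : ℝ, Complex.exp (c * k) * ((max (s - Real.exp k) 0 : ℝ) : ℂ))
      = Complex.exp ((c + 1) * (Real.log s : ℂ)) / (c * (c + 1)) := by
  have hc0 : c ≠ 0 := fun h => by simp [h] at hc
  have hc1 : 0 < (c + 1).re := by simp only [Complex.add_re, Complex.one_re]; linarith
  have hc10 : c + 1 ≠ 0 := fun h => by simp [h] at hc1
  set L := Real.log s with hL
  have hind : (fun k : ℝ => Complex.exp (c * k) * ((max (s - Real.exp k) 0 : ℝ) : ℂ))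
      = (Iic L).indicator
        (fun k : ℝ => (s : ℂ) * Complex.exp (c * k) - Complex.exp ((c + 1) * k)) := by
    funext k
    by_cases hk : k ≤ L
    · rw [Set.indicator_of_mem (Set.mem_Iic.2 hk)]
      have hek : Real.exp k ≤ s := by
        rw [← Real.exp_log hs]; exact Real.exp_le_exp.2 hk
      rw [max_eq_left (by linarith)]
      push_cast
      rw [add_mul, one_mul, Complex.exp_add]
      ring
    · rw [Set.indicator_of_notMem (fun h => hk (Set.mem_Iic.1 h))]
      have hek : s < Real.exp k := by
        rw [← Real.exp_log hs]; exact Real.exp_lt_exp.2 (lt_of_not_ge hk)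
      rw [max_eq_right (by linarith)]
      simp
  have hiOn : IntegrableOn
      (fun k : ℝ => (s : ℂ) * Complex.exp (c * k) - Complex.exp ((c + 1) * k)) (Iic L) :=
    ((cm_integrableOn_cexp_Iic hc L).const_mul (s : ℂ)).sub (cm_integrableOn_cexp_Iic hc1 L)
  have hsL : (s : ℂ) = Complex.exp (L : ℂ) := by
    rw [← Complex.ofReal_exp, hL, Real.exp_log hs]
  constructor
  · rw [hind]
    exact (integrable_indicator_iff measurableSet_Iic).2 hiOn
  · rw [hind, integral_indicator measurableSet_Iic,
      integral_sub ((cm_integrableOn_cexp_Iic hc L).const_mul (s : ℂ))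
        (cm_integrableOn_cexp_Iic hc1 L),
      integral_const_mul, cm_integral_cexp_Iic hc L, cm_integral_cexp_Iic hc1 L]
    rw [hsL, show Complex.exp (L : ℂ) * (Complex.exp (c * L) / c)
        = Complex.exp ((c + 1) * L) / c by
      rw [add_mul, one_mul, Complex.exp_add, mul_div_assoc]; ring]
    field_simp
    ring

open Set Filter in
lemma cm_keyR {a : ℝ} (ha : 0 < a) {s : ℝ} (hs : 0 < s) :
    Integrable (fun k : ℝ => Real.exp (a * k) * max (s - Real.exp k) 0) ∧
    (∫ k : ℝ, Real.exp (a * k) * max (s - Real.exp k) 0)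
      = s ^ (a + 1 : ℝ) / (a * (a + 1)) := by
  have ha1 : 0 < a + 1 := by linarith
  set L := Real.log s with hL
  have hind : (fun k : ℝ => Real.exp (a * k) * max (s - Real.exp k) 0)
      = (Iic L).indicator
        (fun k : ℝ => s * Real.exp (a * k) - Real.exp ((a + 1) * k)) := by
    funext k
    by_cases hk : k ≤ L
    · rw [Set.indicator_of_mem (Set.mem_Iic.2 hk)]
      have hek : Real.exp k ≤ s := by
        rw [← Real.exp_log hs]; exact Real.exp_le_exp.2 hk
      rw [max_eq_left (by linarith)]
      rw [add_mul, one_mul, Real.exp_add]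
      ring
    · rw [Set.indicator_of_notMem (fun h => hk (Set.mem_Iic.1 h))]
      have hek : s < Real.exp k := by
        rw [← Real.exp_log hs]; exact Real.exp_lt_exp.2 (lt_of_not_ge hk)
      rw [max_eq_right (by linarith)]
      simp
  have hiOn : IntegrableOn
      (fun k : ℝ => s * Real.exp (a * k) - Real.exp ((a + 1) * k)) (Iic L) :=
    ((cm_integrableOn_exp_mul_Iic ha L).const_mul s).sub (cm_integrableOn_exp_mul_Iic ha1 L)
  have hsL : s = Real.exp L := by rw [hL, Real.exp_log hs]
  constructor
  · rw [hind]
    exact (integrable_indicator_iff measurableSet_Iic).2 hiOn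
  · rw [hind, integral_indicator measurableSet_Iic,
      integral_sub ((cm_integrableOn_exp_mul_Iic ha L).const_mul s)
        (cm_integrableOn_exp_mul_Iic ha1 L),
      integral_const_mul, cm_integral_exp_mul_Iic ha L, cm_integral_exp_mul_Iic ha1 L]
    have hpow : s ^ (a + 1 : ℝ) = Real.exp ((a + 1) * L) := by
      rw [Real.rpow_def_of_pos hs, hL]; ring_nf
    rw [hpow, hsL, show Real.exp L * (Real.exp (a * L) / a)
        = Real.exp ((a + 1) * L) / a by
      rw [add_mul, one_mul, Real.exp_add, mul_div_assoc]; ring]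
    field_simp
    ring

theorem carr_madan_fourier_transform
    {Ω : Type*} {mΩ : MeasurableSpace Ω} {μ : Measure Ω} [IsProbabilityMeasure μ]
    (S : Ω → ℝ) (hS_pos : ∀ ω, 0 < S ω)
    (α : ℝ) (hα : 0 < α)
    (hmoment : Integrable (fun ω => S ω ^ (α + 1 : ℝ)) μ)
    (r τ : ℝ) (hr : 0 ≤ r) (hτ : 0 ≤ τ)
    (z : ℝ → ℝ)
    (hz : ∀ k : ℝ, z k
        = Real.exp (α * k) * ∫ ω, Real.exp (-(r * τ)) * max (S ω - Real.exp k) 0 ∂μ) :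
    ∀ v : ℝ,
      Integrable (fun k : ℝ => Complex.exp (Complex.I * v * k) * (z k : ℂ)) ∧
      (∫ k : ℝ, Complex.exp (Complex.I * v * k) * (z k : ℂ))
        = Complex.exp (-(r * τ : ℝ)) *
            (∫ ω, Complex.exp (((α : ℂ) + 1 + Complex.I * v) * (Real.log (S ω) : ℂ)) ∂μ)
            / (((α : ℂ) + Complex.I * v) * ((α : ℂ) + 1 + Complex.I * v)) ∧
      ((α : ℂ) + Complex.I * v) * ((α : ℂ) + 1 + Complex.I * v)
        = ((α : ℂ)^2 + α - (v : ℂ)^2) + Complex.I * (2 * α + 1) * v := by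
  intro v
  set c : ℂ := (α : ℂ) + Complex.I * v with hc_def
  have hcre : 0 < c.re := by
    simpa [hc_def] using hα
  have hc1 : ((α : ℂ) + 1 + Complex.I * v) = c + 1 := by rw [hc_def]; ring
  set G : ℝ × Ω → ℂ := fun p =>
    Complex.exp (-(r * τ : ℝ)) *
      (Complex.exp (c * p.1) * ((max (S p.2 - Real.exp p.1) 0 : ℝ) : ℂ)) with hG
  -- S is a.e.-measurable
  have hS1 : AEMeasurable (fun ω => S ω ^ (α + 1 : ℝ)) μ := hmoment.aemeasurable
  have hcont : Continuous fun x : ℝ => x ^ ((α + 1 : ℝ)⁻¹) := by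
    rw [continuous_iff_continuousAt]
    intro x
    exact Real.continuousAt_rpow_const x _ (Or.inr (by positivity))
  have hSae : AEMeasurable S μ := by
    refine (hcont.measurable.comp_aemeasurable hS1).congr (Filter.Eventually.of_forall fun ω => ?_)
    show (S ω ^ (α + 1 : ℝ)) ^ ((α + 1 : ℝ)⁻¹) = S ω
    rw [← Real.rpow_mul (hS_pos ω).le,
      mul_inv_cancel₀ (by positivity : (α + 1 : ℝ) ≠ 0), Real.rpow_one]
  -- measurability of G
  have hGm : AEStronglyMeasurable G ((volume : Measure ℝ).prod μ) := by
    apply AEMeasurable.aestronglyMeasurable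
    have hmax : AEMeasurable (fun p : ℝ × Ω => max (S p.2 - Real.exp p.1) 0)
        ((volume : Measure ℝ).prod μ) :=
      ((hSae.comp_quasiMeasurePreserving Measure.quasiMeasurePreserving_snd).sub
        (Real.measurable_exp.comp measurable_fst).aemeasurable).max aemeasurable_const
    exact aemeasurable_const.mul
      (((Complex.measurable_exp.comp
          (measurable_const.mul (Complex.measurable_ofReal.comp measurable_fst))).aemeasurable).mul
        (Complex.measurable_ofReal.comp_aemeasurable hmax))
  -- norm of G
  have hnorm : ∀ p : ℝ × Ω, ‖G p‖
      = Real.exp (-(r * τ)) * (Real.exp (α * p.1) * max (S p.2 - Real.exp p.1) 0) := by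
    intro p
    simp only [hG, norm_mul, Complex.norm_exp, Complex.norm_real, Real.norm_eq_abs]
    rw [_root_.abs_of_nonneg (le_max_right _ _)]
    simp [hc_def, Complex.mul_re]
  -- joint integrability
  have hGint : Integrable G ((volume : Measure ℝ).prod μ) := by
    rw [integrable_prod_iff' hGm]
    constructor
    · exact Filter.Eventually.of_forall fun ω =>
        ((cm_key hcre (hS_pos ω)).1.const_mul _)
    · have heq : (fun ω => ∫ k, ‖G (k, ω)‖)
          = fun ω => Real.exp (-(r * τ)) * (S ω ^ (α + 1 : ℝ) / (α * (α + 1))) := by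
        funext ω
        simp only [hnorm]
        rw [integral_const_mul, (cm_keyR hα (hS_pos ω)).2]
      rw [heq]
      exact (hmoment.div_const _).const_mul _
  -- pointwise identification
  have hpt : (fun k : ℝ => Complex.exp (Complex.I * v * k) * (z k : ℂ))
      = fun k => ∫ ω, G (k, ω) ∂μ := by
    funext k
    have h1 : ∫ ω, G (k, ω) ∂μ
        = (Complex.exp (-(r * τ : ℝ)) * Complex.exp (c * k)) *
            ((∫ ω, max (S ω - Real.exp k) 0 ∂μ : ℝ) : ℂ) := by
      have hcoe : ∫ ω, ((max (S ω - Real.exp k) 0 : ℝ) : ℂ) ∂μ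
          = ((∫ ω, max (S ω - Real.exp k) 0 ∂μ : ℝ) : ℂ) := integral_ofReal
      rw [← hcoe, ← integral_const_mul]
      congr 1
      funext ω
      simp only [hG]
      ring
    rw [hz k, integral_const_mul, h1]
    push_cast
    rw [show c * (k : ℂ) = (α : ℂ) * k + Complex.I * v * k by rw [hc_def]; ring,
      Complex.exp_add]
    ring
  refine ⟨?_, ?_, by linear_combination (v : ℂ)^2 * Complex.I_sq⟩
  · rw [hpt]
    exact hGint.integral_prod_left
  · rw [hpt, MeasureTheory.integral_integral_swap (f := fun k ω => G (k, ω)) hGint]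
    have hin : ∀ ω, (∫ k, G (k, ω))
        = Complex.exp (-(r * τ : ℝ)) *
            (Complex.exp ((c + 1) * (Real.log (S ω) : ℂ)) / (c * (c + 1))) := by
      intro ω
      simp only [hG]
      rw [integral_const_mul, (cm_key hcre (hS_pos ω)).2]
    simp only [hin]
    rw [integral_const_mul, integral_div, hc1]
    rw [mul_div_assoc]
end

section
/- For every x > 0 and every K > 0, the function K ↦ c(x, K) is differentiable at K with derivative −e^{−rτ}·N(d2(x, K)); that is, ∂c/∂K(x, K) = −e^{−rτ}·N(d2(x, K)). -/
open MeasureTheory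

/-- Standard normal cumulative distribution function. -/
noncomputable def stdNormalCDF (y : ℝ) : ℝ :=
  ∫ t in Set.Iic y, Real.exp (-t ^ 2 / 2) / Real.sqrt (2 * Real.pi)

/-- Standard normal density. -/
noncomputable def stdNormalPDF (y : ℝ) : ℝ :=
  Real.exp (-y ^ 2 / 2) / Real.sqrt (2 * Real.pi)

/-- Black–Scholes `d1`. -/
noncomputable def bsD1 (r σ τ x K : ℝ) : ℝ :=
  (Real.log (x / K) + (r + σ ^ 2 / 2) * τ) / (σ * Real.sqrt τ)

/-- Black–Scholes `d2`. -/
noncomputable def bsD2 (r σ τ x K : ℝ) : ℝ :=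
  bsD1 r σ τ x K - σ * Real.sqrt τ

/-- Black–Scholes European call price. -/
noncomputable def bsCall (r σ τ x K : ℝ) : ℝ :=
  x * stdNormalCDF (bsD1 r σ τ x K) - K * Real.exp (-(r * τ)) * stdNormalCDF (bsD2 r σ τ x K)

lemma stdNormal_integrable :
    Integrable (fun t : ℝ => Real.exp (-t ^ 2 / 2) / Real.sqrt (2 * Real.pi)) := by
  have h := (integrable_exp_neg_mul_sq (by norm_num : (0:ℝ) < 1/2)).div_const
    (Real.sqrt (2 * Real.pi))
  convert h using 2 with t
  ring_nf

lemma stdNormal_continuous :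
    Continuous (fun t : ℝ => Real.exp (-t ^ 2 / 2) / Real.sqrt (2 * Real.pi)) := by
  fun_prop

lemma hasDerivAt_stdNormalCDF (y : ℝ) : HasDerivAt stdNormalCDF (stdNormalPDF y) y := by
  set f : ℝ → ℝ := fun t => Real.exp (-t ^ 2 / 2) / Real.sqrt (2 * Real.pi) with hf
  have hint := stdNormal_integrable
  have key : stdNormalCDF = fun u => stdNormalCDF 0 + ∫ t in (0:ℝ)..u, f t := by
    funext u
    have := intervalIntegral.integral_Iic_sub_Iic (f := f) (μ := volume) (a := (0:ℝ)) (b := u)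
      hint.integrableOn hint.integrableOn
    simp only [stdNormalCDF]
    linarith [this]
  have hder : HasDerivAt (fun u => ∫ t in (0:ℝ)..u, f t) (f y) y :=
    intervalIntegral.integral_hasDerivAt_right hint.intervalIntegrable
      (stdNormal_continuous.stronglyMeasurable.stronglyMeasurableAtFilter)
      stdNormal_continuous.continuousAt
  rw [key]
  exact hder.const_add _

lemma bs_key_identity (r σ τ x K : ℝ) (hσ : 0 < σ) (hτ : 0 < τ) (hx : 0 < x) (hK : 0 < K) :
    x * stdNormalPDF (bsD1 r σ τ x K) =
      K * Real.exp (-(r * τ)) * stdNormalPDF (bsD2 r σ τ x K) := by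
  have hs : (0:ℝ) < σ * Real.sqrt τ := mul_pos hσ (Real.sqrt_pos.mpr hτ)
  have hd1s : bsD1 r σ τ x K * (σ * Real.sqrt τ) = Real.log (x / K) + (r + σ ^ 2 / 2) * τ := by
    unfold bsD1; field_simp
  have hs2 : (σ * Real.sqrt τ) ^ 2 = σ ^ 2 * τ := by
    rw [mul_pow, Real.sq_sqrt hτ.le]
  have hexp : Real.exp (-(bsD1 r σ τ x K) ^ 2 / 2) =
      Real.exp (-(bsD2 r σ τ x K) ^ 2 / 2) * Real.exp (-Real.log (x / K)) *
        Real.exp (-(r * τ)) := by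
    rw [← Real.exp_add, ← Real.exp_add]
    congr 1
    unfold bsD2
    have hts : Real.sqrt τ ^ 2 = τ := Real.sq_sqrt hτ.le
    linear_combination -hd1s + (σ ^ 2 / 2) * hts
  have hlog : Real.exp (-Real.log (x / K)) = K / x := by
    rw [Real.exp_neg, Real.exp_log (div_pos hx hK), inv_div]
  unfold stdNormalPDF
  rw [hexp, hlog]
  field_simp

lemma hasDerivAt_bsD1 (r σ τ x : ℝ) (hσ : 0 < σ) (hτ : 0 < τ) (hx : 0 < x) (K : ℝ)
    (hK : 0 < K) :
    HasDerivAt (fun k => bsD1 r σ τ x k) (-(1 / (K * (σ * Real.sqrt τ)))) K := by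
  have hs : (0:ℝ) < σ * Real.sqrt τ := mul_pos hσ (Real.sqrt_pos.mpr hτ)
  have hlog : HasDerivAt (fun k : ℝ => Real.log (x / k)) (-K⁻¹) K := by
    have h : HasDerivAt (fun k : ℝ => Real.log x - Real.log k) (-K⁻¹) K := by
      exact ((hasDerivAt_const K (Real.log x)).sub (Real.hasDerivAt_log hK.ne')).congr_deriv (by simp)
    refine h.congr_of_eventuallyEq ?_
    filter_upwards [eventually_gt_nhds hK] with k hk
    rw [Real.log_div hx.ne' hk.ne']
  have h := ((hlog.add_const ((r + σ ^ 2 / 2) * τ)).div_const (σ * Real.sqrt τ))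
  refine h.congr_deriv ?_
  ring

theorem bs_call_strike_derivative (r σ τ : ℝ) (hσ : 0 < σ) (hτ : 0 < τ) :
    ∀ x : ℝ, 0 < x → ∀ K : ℝ, 0 < K →
      HasDerivAt (fun k => bsCall r σ τ x k)
        (-(Real.exp (-(r * τ)) * stdNormalCDF (bsD2 r σ τ x K))) K := by
  intro x hx K hK
  have hd1 := hasDerivAt_bsD1 r σ τ x hσ hτ hx K hK
  have hd2 : HasDerivAt (fun k => bsD2 r σ τ x k) (-(1 / (K * (σ * Real.sqrt τ)))) K :=
    hd1.sub_const _
  have h1 : HasDerivAt (fun k => stdNormalCDF (bsD1 r σ τ x k))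
      (stdNormalPDF (bsD1 r σ τ x K) * -(1 / (K * (σ * Real.sqrt τ)))) K :=
    (hasDerivAt_stdNormalCDF _).comp K hd1
  have h2 : HasDerivAt (fun k => stdNormalCDF (bsD2 r σ τ x k))
      (stdNormalPDF (bsD2 r σ τ x K) * -(1 / (K * (σ * Real.sqrt τ)))) K :=
    (hasDerivAt_stdNormalCDF _).comp K hd2
  have h3 : HasDerivAt (fun k : ℝ => k * Real.exp (-(r * τ))) (Real.exp (-(r * τ))) K := by
    simpa using (hasDerivAt_id K).mul_const (Real.exp (-(r * τ)))
  have h := (h1.const_mul x).sub (h3.mul h2)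
  have hkey := bs_key_identity r σ τ x K hσ hτ hx hK
  unfold bsCall
  refine h.congr_deriv ?_
  linear_combination (-(1 / (K * (σ * Real.sqrt τ)))) * hkey
end

section
/- Let Z be a standard Gaussian random variable (mean 0, variance 1) on a probability space, let x > 0, T > 0, and set F = e^{rT}·x and S = F·exp(−σ²T/2 + σ√T·Z). For K > 0 define φ(K) = E[e^{−rT}·(K − S)⁺] if 0 < K ≤ F and φ(K) = E[e^{−rT}·(S − K)⁺] if K > F. Let g : (0, ∞) → ℝ be twice continuously differentiable such that g(S) is integrable and ∫₀^∞ |g''(K)|·φ(K) dK < ∞. Then E[g(S)] = g(F) + e^{rT} · ∫₀^∞ g''(K)·φ(K) dK. -/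
open MeasureTheory ProbabilityTheory Real Set

lemma gauss_pdf_mul (c x : ℝ) :
    gaussianPDFReal 0 1 x * Real.exp (c * x)
      = ((Real.sqrt (2 * π))⁻¹ * Real.exp (c ^ 2 / 2)) * Real.exp (-(1/2) * (x - c) ^ 2) := by
  simp only [gaussianPDFReal, NNReal.coe_one, mul_one, sub_zero]
  rw [mul_assoc, mul_assoc, ← Real.exp_add, ← Real.exp_add]
  ring_nf

lemma gauss_base_int (c : ℝ) : Integrable (fun x : ℝ => Real.exp (-(1/2) * (x - c) ^ 2)) volume := by
  exact (integrable_exp_neg_mul_sq (by norm_num : (0:ℝ) < 1/2)).comp_sub_right c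

lemma gauss_base_val (c : ℝ) :
    ∫ x : ℝ, Real.exp (-(1/2) * (x - c) ^ 2) = Real.sqrt (2 * π) := by
  rw [integral_sub_right_eq_self (μ := volume) (fun x => Real.exp (-(1/2) * x ^ 2)) c,
    integral_gaussian]
  norm_num; ring

lemma gaussianReal_std :
    gaussianReal 0 1 = volume.withDensity (fun x => ((gaussianPDFReal 0 1 x).toNNReal : ENNReal)) := by
  rw [gaussianReal_of_var_ne_zero 0 one_ne_zero]
  rfl

lemma gauss_exp_int (c : ℝ) : Integrable (fun z => Real.exp (c * z)) (gaussianReal 0 1) := by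
  rw [gaussianReal_std]
  refine (integrable_withDensity_iff_integrable_smul (E := ℝ)
    (measurable_gaussianPDFReal 0 1).real_toNNReal).mpr ?_
  have : (fun x => (gaussianPDFReal 0 1 x).toNNReal • Real.exp (c * x))
      = fun x => ((Real.sqrt (2 * π))⁻¹ * Real.exp (c ^ 2 / 2)) * Real.exp (-(1/2) * (x - c) ^ 2) := by
    funext x
    rw [NNReal.smul_def, smul_eq_mul, Real.coe_toNNReal _ (gaussianPDFReal_nonneg 0 1 x),
      gauss_pdf_mul]
  rw [this]
  exact (gauss_base_int c).const_mul _

lemma gauss_exp_val (c : ℝ) :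
    ∫ z, Real.exp (c * z) ∂(gaussianReal 0 1) = Real.exp (c ^ 2 / 2) := by
  rw [gaussianReal_std,
    integral_withDensity_eq_integral_smul (measurable_gaussianPDFReal 0 1).real_toNNReal]
  have : (fun x => (gaussianPDFReal 0 1 x).toNNReal • Real.exp (c * x))
      = fun x => ((Real.sqrt (2 * π))⁻¹ * Real.exp (c ^ 2 / 2)) * Real.exp (-(1/2) * (x - c) ^ 2) := by
    funext x
    rw [NNReal.smul_def, smul_eq_mul, Real.coe_toNNReal _ (gaussianPDFReal_nonneg 0 1 x),
      gauss_pdf_mul]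
  rw [this, integral_const_mul, gauss_base_val c]
  have h2 : Real.sqrt (2 * π) ≠ 0 := by positivity
  field_simp

lemma spanning_pointwise (F : ℝ) (hF0 : 0 < F) (g : ℝ → ℝ)
    (hD : ∀ y ∈ Set.Ioi (0:ℝ), HasDerivAt g (deriv g y) y)
    (hD2 : ∀ y ∈ Set.Ioi (0:ℝ), HasDerivAt (deriv g) (deriv (deriv g) y) y)
    (hD2c : ContinuousOn (deriv (deriv g)) (Set.Ioi 0))
    (s : ℝ) (hs : 0 < s) :
    ∫ K in Set.Ioi (0:ℝ),
        deriv (deriv g) K * (if K ≤ F then max (K - s) 0 else max (s - K) 0)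
      = g s - g F - deriv g F * (s - F) := by
  rcases le_or_gt s F with hsF | hFs
  · -- put side: integrate over Ioc s F
    have hsub : Set.Ioc s F ⊆ Set.Ioi (0:ℝ) := fun K hK => lt_trans hs hK.1
    rw [setIntegral_eq_of_subset_of_forall_diff_eq_zero measurableSet_Ioi hsub ?_]
    swap
    · intro K hK
      rcases le_or_gt K F with h1 | h1
      · have hKs : K ≤ s := by
          by_contra h
          exact hK.2 ⟨not_le.mp h, h1⟩
        rw [if_pos h1, max_eq_right (by linarith), mul_zero]
      · rw [if_neg (not_le.mpr h1), max_eq_right (by linarith), mul_zero]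
    have hcong : ∀ K ∈ Set.Ioc s F,
        deriv (deriv g) K * (if K ≤ F then max (K - s) 0 else max (s - K) 0)
          = deriv (deriv g) K * (K - s) := by
      intro K hK
      rw [if_pos hK.2, max_eq_left (by linarith [hK.1])]
    rw [setIntegral_congr_fun measurableSet_Ioc hcong, ← intervalIntegral.integral_of_le hsF]
    have huicc : Set.uIcc s F ⊆ Set.Ioi (0:ℝ) := by
      rw [Set.uIcc_of_le hsF]
      exact fun K hK => lt_of_lt_of_le hs hK.1
    have key : ∀ K ∈ Set.uIcc s F,
        HasDerivAt (fun y => deriv g y * (y - s) - g y) (deriv (deriv g) K * (K - s)) K := by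
      intro K hK
      have hK0 := huicc hK
      have h := ((hD2 K hK0).mul ((hasDerivAt_id K).sub_const s)).sub (hD K hK0)
      exact h.congr_deriv (by simp only [id_eq, Pi.sub_apply]; ring)
    have hint : IntervalIntegrable (fun K => deriv (deriv g) K * (K - s)) volume s F := by
      apply ContinuousOn.intervalIntegrable
      exact (hD2c.mono huicc).mul (continuousOn_id.sub continuousOn_const)
    rw [intervalIntegral.integral_eq_sub_of_hasDerivAt key hint]
    simp only [sub_self, mul_zero]
    ring
  · -- call side: integrate over Ioc F s
    have hsub : Set.Ioc F s ⊆ Set.Ioi (0:ℝ) := fun K hK => lt_trans hF0 hK.1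
    rw [setIntegral_eq_of_subset_of_forall_diff_eq_zero measurableSet_Ioi hsub ?_]
    swap
    · intro K hK
      rcases le_or_gt K F with h1 | h1
      · rw [if_pos h1, max_eq_right (by linarith), mul_zero]
      · have hKs : s ≤ K := by
          by_contra h
          exact hK.2 ⟨h1, le_of_lt (not_le.mp h)⟩
        rw [if_neg (not_le.mpr h1), max_eq_right (by linarith), mul_zero]
    have hcong : ∀ K ∈ Set.Ioc F s,
        deriv (deriv g) K * (if K ≤ F then max (K - s) 0 else max (s - K) 0)
          = deriv (deriv g) K * (s - K) := by
      intro K hK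
      rw [if_neg (not_le.mpr hK.1), max_eq_left (by linarith [hK.2])]
    rw [setIntegral_congr_fun measurableSet_Ioc hcong, ← intervalIntegral.integral_of_le hFs.le]
    have huicc : Set.uIcc F s ⊆ Set.Ioi (0:ℝ) := by
      rw [Set.uIcc_of_le hFs.le]
      exact fun K hK => lt_of_lt_of_le hF0 hK.1
    have key : ∀ K ∈ Set.uIcc F s,
        HasDerivAt (fun y => deriv g y * (s - y) + g y) (deriv (deriv g) K * (s - K)) K := by
      intro K hK
      have hK0 := huicc hK
      have h := ((hD2 K hK0).mul ((hasDerivAt_const K s).sub (hasDerivAt_id K))).add (hD K hK0)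
      exact h.congr_deriv (by simp only [id_eq, Pi.sub_apply]; ring)
    have hint : IntervalIntegrable (fun K => deriv (deriv g) K * (s - K)) volume F s := by
      apply ContinuousOn.intervalIntegrable
      exact (hD2c.mono huicc).mul (continuousOn_const.sub continuousOn_id)
    rw [intervalIntegral.integral_eq_sub_of_hasDerivAt key hint]
    simp only [sub_self, mul_zero]
    ring

theorem lognormal_spanning_formula
    {Ω : Type*} {mΩ : MeasurableSpace Ω} {μ : Measure Ω} [IsProbabilityMeasure μ]
    (r σ : ℝ) (hσ : 0 < σ)
    (Z : Ω → ℝ) (hZ_meas : Measurable Z) (hZ : μ.map Z = gaussianReal 0 1)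
    (x T : ℝ) (hx : 0 < x) (hT : 0 < T)
    (F : ℝ) (hF : F = Real.exp (r * T) * x)
    (S : Ω → ℝ)
    (hS : ∀ ω, S ω = F * Real.exp (-σ ^ 2 * T / 2 + σ * Real.sqrt T * Z ω))
    (φ : ℝ → ℝ)
    (hφ : ∀ K : ℝ, 0 < K →
        φ K = if K ≤ F then ∫ ω, Real.exp (-(r * T)) * max (K - S ω) 0 ∂μ
              else ∫ ω, Real.exp (-(r * T)) * max (S ω - K) 0 ∂μ)
    (g : ℝ → ℝ) (hg : ContDiffOn ℝ 2 g (Set.Ioi 0))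
    (hg_int : Integrable (fun ω => g (S ω)) μ)
    (hg''φ_int : IntegrableOn (fun K => |deriv (deriv g) K| * φ K) (Set.Ioi 0)) :
    (∫ ω, g (S ω) ∂μ)
      = g F + Real.exp (r * T) * ∫ K in Set.Ioi (0 : ℝ), deriv (deriv g) K * φ K := by
  have hF0 : 0 < F := hF ▸ mul_pos (Real.exp_pos _) hx
  set c : ℝ := σ * Real.sqrt T with hc_def
  have hc2 : c ^ 2 = σ ^ 2 * T := by
    rw [hc_def, mul_pow, Real.sq_sqrt hT.le]
  -- measurability and positivity of S
  have hS_fun : S = fun ω => F * Real.exp (-σ ^ 2 * T / 2 + c * Z ω) := funext hS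
  have hS_meas : Measurable S := by
    rw [hS_fun]
    exact measurable_const.mul (Real.measurable_exp.comp
      (measurable_const.add (hZ_meas.const_mul c)))
  have hS_pos : ∀ ω, 0 < S ω := by
    intro ω
    rw [hS ω]
    positivity
  -- integrability and mean of S
  have haesm : AEStronglyMeasurable (fun z => Real.exp (c * z)) (μ.map Z) :=
    (Real.continuous_exp.comp (continuous_const.mul continuous_id)).aestronglyMeasurable
  have hexpZ_int : Integrable (fun ω => Real.exp (c * Z ω)) μ := by
    have h := gauss_exp_int c
    rw [← hZ] at h
    exact (integrable_map_measure haesm hZ_meas.aemeasurable).mp h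
  have hexpZ_val : ∫ ω, Real.exp (c * Z ω) ∂μ = Real.exp (c ^ 2 / 2) := by
    rw [← integral_map hZ_meas.aemeasurable haesm, hZ, gauss_exp_val c]
  have hS_eq : ∀ ω, S ω = (F * Real.exp (-σ ^ 2 * T / 2)) * Real.exp (c * Z ω) := by
    intro ω
    rw [hS ω, Real.exp_add, ← mul_assoc]
  have hS_int : Integrable S μ := by
    apply (hexpZ_int.const_mul (F * Real.exp (-σ ^ 2 * T / 2))).congr
    exact Filter.Eventually.of_forall fun ω => (hS_eq ω).symm
  have hS_mean : ∫ ω, S ω ∂μ = F := by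
    have : ∫ ω, S ω ∂μ = ∫ ω, (F * Real.exp (-σ ^ 2 * T / 2)) * Real.exp (c * Z ω) ∂μ :=
      integral_congr_ae (Filter.Eventually.of_forall hS_eq)
    rw [this, integral_const_mul, hexpZ_val, mul_assoc, ← Real.exp_add]
    rw [show -σ ^ 2 * T / 2 + c ^ 2 / 2 = 0 by rw [hc2]; ring, Real.exp_zero, mul_one]
  -- derivatives of g
  have hg1 : ContDiffOn ℝ 1 (deriv g) (Set.Ioi 0) := by
    apply hg.deriv_of_isOpen isOpen_Ioi
    norm_num
  have hD : ∀ y ∈ Set.Ioi (0:ℝ), HasDerivAt g (deriv g y) y := fun y hy =>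
    ((hg.differentiableOn two_ne_zero).differentiableAt (isOpen_Ioi.mem_nhds hy)).hasDerivAt
  have hD2 : ∀ y ∈ Set.Ioi (0:ℝ), HasDerivAt (deriv g) (deriv (deriv g) y) y := fun y hy =>
    ((hg1.differentiableOn one_ne_zero).differentiableAt (isOpen_Ioi.mem_nhds hy)).hasDerivAt
  have hD2c : ContinuousOn (deriv (deriv g)) (Set.Ioi 0) :=
    hg1.continuousOn_deriv_of_isOpen isOpen_Ioi le_rfl
  -- payoff integrability and values
  have hψ_meas : ∀ K : ℝ, Measurable
      (fun ω => if K ≤ F then max (K - S ω) 0 else max (S ω - K) 0) := by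
    intro K
    by_cases h : K ≤ F
    · simp only [if_pos h]
      exact (measurable_const.sub hS_meas).max measurable_const
    · simp only [if_neg h]
      exact (hS_meas.sub measurable_const).max measurable_const
  have hψ_int : ∀ K : ℝ, 0 < K →
      Integrable (fun ω => if K ≤ F then max (K - S ω) 0 else max (S ω - K) 0) μ := by
    intro K hK
    by_cases h : K ≤ F
    · simp only [if_pos h]
      apply Integrable.mono (integrable_const K)
        ((measurable_const.sub hS_meas).max measurable_const).aestronglyMeasurable
      apply Filter.Eventually.of_forall
      intro ω
      have h1 := (hS_pos ω).le
      rw [Real.norm_eq_abs, Real.norm_eq_abs, abs_of_nonneg (le_max_right _ _),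
        abs_of_pos hK]
      exact max_le (by simp only [Pi.sub_apply]; linarith) hK.le
    · simp only [if_neg h]
      apply Integrable.mono hS_int
        ((hS_meas.sub measurable_const).max measurable_const).aestronglyMeasurable
      apply Filter.Eventually.of_forall
      intro ω
      have h1 := hS_pos ω
      rw [Real.norm_eq_abs, Real.norm_eq_abs, abs_of_nonneg (le_max_right _ _),
        abs_of_pos h1]
      exact max_le (by simp only [Pi.sub_apply]; linarith) h1.le
  have hψ_val : ∀ K : ℝ, 0 < K →
      ∫ ω, (if K ≤ F then max (K - S ω) 0 else max (S ω - K) 0) ∂μ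
        = Real.exp (r * T) * φ K := by
    intro K hK
    rw [hφ K hK]
    by_cases h : K ≤ F
    · simp only [if_pos h]
      rw [integral_const_mul, ← mul_assoc, ← Real.exp_add, add_neg_cancel, Real.exp_zero,
        one_mul]
    · simp only [if_neg h]
      rw [integral_const_mul, ← mul_assoc, ← Real.exp_add, add_neg_cancel, Real.exp_zero,
        one_mul]
  -- the product function
  set f : ℝ → Ω → ℝ := fun K ω =>
    deriv (deriv g) K * (if K ≤ F then max (K - S ω) 0 else max (S ω - K) 0) with hf_def
  have hf_meas : AEStronglyMeasurable (Function.uncurry f)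
      ((volume.restrict (Set.Ioi (0:ℝ))).prod μ) := by
    apply Measurable.aestronglyMeasurable
    apply Measurable.mul
    · exact (measurable_deriv (deriv g)).comp measurable_fst
    · apply Measurable.ite (measurableSet_le measurable_fst measurable_const)
      · exact (measurable_fst.sub (hS_meas.comp measurable_snd)).max measurable_const
      · exact ((hS_meas.comp measurable_snd).sub measurable_fst).max measurable_const
  have hnorm_eq : ∀ K ∈ Set.Ioi (0:ℝ), ∫ ω, ‖f K ω‖ ∂μ
      = Real.exp (r * T) * (|deriv (deriv g) K| * φ K) := by
    intro K hK
    have : (fun ω => ‖f K ω‖) = fun ω =>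
        |deriv (deriv g) K| * (if K ≤ F then max (K - S ω) 0 else max (S ω - K) 0) := by
      funext ω
      rw [hf_def]
      simp only [Real.norm_eq_abs, abs_mul]
      congr 1
      by_cases h : K ≤ F
      · simp only [if_pos h]; exact abs_of_nonneg (le_max_right _ _)
      · simp only [if_neg h]; exact abs_of_nonneg (le_max_right _ _)
    rw [this, integral_const_mul, hψ_val K hK]
    ring
  have h_int_prod : Integrable (Function.uncurry f)
      ((volume.restrict (Set.Ioi (0:ℝ))).prod μ) := by
    rw [integrable_prod_iff hf_meas]
    simp only [Function.uncurry_apply_pair]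
    constructor
    · filter_upwards [ae_restrict_mem measurableSet_Ioi] with K hK
      exact (hψ_int K hK).const_mul _
    · apply ((hg''φ_int.const_mul (Real.exp (r * T)))).congr
      rw [Filter.EventuallyEq, ae_restrict_iff' measurableSet_Ioi]
      exact Filter.Eventually.of_forall fun K hK => (hnorm_eq K hK).symm
  have hswap : ∫ K in Set.Ioi (0:ℝ), ∫ ω, f K ω ∂μ
      = ∫ ω, (∫ K in Set.Ioi (0:ℝ), f K ω) ∂μ := integral_integral_swap h_int_prod
  -- inner integral over K
  have h_inner : ∀ ω, ∫ K in Set.Ioi (0:ℝ), f K ω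
      = g (S ω) - g F - deriv g F * (S ω - F) := fun ω =>
    spanning_pointwise F hF0 g hD hD2 hD2c (S ω) (hS_pos ω)
  -- RHS of swap
  have hRHS : ∫ ω, (∫ K in Set.Ioi (0:ℝ), f K ω) ∂μ = (∫ ω, g (S ω) ∂μ) - g F := by
    have : (fun ω => ∫ K in Set.Ioi (0:ℝ), f K ω)
        = fun ω => g (S ω) - g F - deriv g F * (S ω - F) := funext h_inner
    rw [this]
    have e1 : Integrable (fun ω => g (S ω) - g F) μ := by
      exact hg_int.sub (integrable_const (g F))
    have e2 : Integrable (fun ω => deriv g F * (S ω - F)) μ := by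
      have h3 : Integrable (fun ω => S ω - F) μ := by
        exact hS_int.sub (integrable_const F)
      exact h3.const_mul _
    rw [integral_sub e1 e2, integral_sub hg_int (integrable_const (g F)), integral_const_mul,
      integral_sub hS_int (integrable_const F), integral_const, probReal_univ, hS_mean]
    simp
  -- LHS of swap
  have hLHS : ∫ K in Set.Ioi (0:ℝ), ∫ ω, f K ω ∂μ
      = Real.exp (r * T) * ∫ K in Set.Ioi (0:ℝ), deriv (deriv g) K * φ K := by
    have h1 : ∀ K ∈ Set.Ioi (0:ℝ), ∫ ω, f K ω ∂μ
        = Real.exp (r * T) * (deriv (deriv g) K * φ K) := by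
      intro K hK
      rw [hf_def]
      simp only
      rw [integral_const_mul, hψ_val K hK]
      ring
    rw [setIntegral_congr_fun measurableSet_Ioi h1, integral_const_mul]
  rw [hLHS, hRHS] at hswap
  linarith
end

section
/- Fix E > 0, 0 < T₁ < T₂, set τ₂ = T₂ − T₁, and let Z₁, Z₂ be independent standard Gaussian random variables (mean 0, variance 1) on a probability space. For x > 0 define S₁ = x·exp((r − σ²/2)T₁ + σ√T₁·Z₁) and S₂ = S₁·exp((r − σ²/2)τ₂ + σ√τ₂·Z₂). Define g : (0, ∞) → ℝ by g(y) = (1/2)·c_{τ₂}(y, 2E − y) for 0 < y < 2E and g(y) = (1/2)·(y + e^{−rτ₂}·(y − 2E)) for y ≥ 2E, where c_{τ₂}(x,K) = x·N(d1(x,K)) − K·e^{−rτ₂}·N(d2(x,K)) with d1(x,K) = (log(x/K) + (r + σ²/2)τ₂)/(σ√τ₂) and d2 = d1 − σ√τ₂. Then E[e^{−rT₂}·((S₁ + S₂)/2 − E)⁺] = e^{−rT₁}·E[g(S₁)]. -/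
open MeasureTheory ProbabilityTheory Real Set

noncomputable def stdPDF (z : ℝ) : ℝ := Real.exp (-z ^ 2 / 2) / Real.sqrt (2 * Real.pi)

lemma stdPDF_nonneg (z : ℝ) : 0 ≤ stdPDF z :=
  div_nonneg (Real.exp_nonneg _) (Real.sqrt_nonneg _)

lemma stdPDF_eq_gauss (z : ℝ) : gaussianPDFReal 0 1 z = stdPDF z := by
  simp [gaussianPDFReal, stdPDF, div_eq_inv_mul, mul_comm]

lemma integrable_stdPDF : Integrable stdPDF := by
  have h := (integrable_exp_neg_mul_sq (by norm_num : (0:ℝ) < 1/2)).div_const (Real.sqrt (2*Real.pi))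
  convert h using 2 with z
  simp [stdPDF]
  ring_nf

lemma integral_stdPDF : ∫ z, stdPDF z = 1 := by
  have := integral_gaussianPDFReal_eq_one 0 (one_ne_zero : (1:NNReal) ≠ 0)
  simpa [stdPDF_eq_gauss] using this

lemma stdNormalCDF_mono : Monotone stdNormalCDF := by
  intro a b hab
  exact setIntegral_mono_set integrable_stdPDF.integrableOn
    (Filter.Eventually.of_forall stdPDF_nonneg)
    (HasSubset.Subset.eventuallyLE (Set.Iic_subset_Iic.2 hab))

lemma stdNormalCDF_measurable : Measurable stdNormalCDF := stdNormalCDF_mono.measurable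

lemma integral_Ici_stdPDF (c : ℝ) : ∫ z in Ici c, stdPDF z = stdNormalCDF (-c) := by
  have h : ∫ z in Iic (-c), stdPDF (-z) = ∫ z in Ioi c, stdPDF z := by
    simpa using integral_comp_neg_Iic (-c) stdPDF
  have h2 : ∀ z, stdPDF (-z) = stdPDF z := fun z => by simp [stdPDF]
  simp_rw [h2] at h
  rw [integral_Ici_eq_integral_Ioi, ← h]
  rfl

lemma stdNormalCDF_compl (c : ℝ) : stdNormalCDF c + stdNormalCDF (-c) = 1 := by
  rw [← integral_Ici_stdPDF c, ← integral_stdPDF]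
  have : stdNormalCDF c = ∫ z in Iic c, stdPDF z := rfl
  rw [this, integral_Ici_eq_integral_Ioi, ← Set.compl_Iic,
    integral_add_compl measurableSet_Iic integrable_stdPDF]

lemma integral_gaussianReal_eq (f : ℝ → ℝ) :
    ∫ z, f z ∂(gaussianReal 0 1) = ∫ z, f z * stdPDF z := by
  rw [gaussianReal_of_var_ne_zero 0 (one_ne_zero : (1:NNReal) ≠ 0)]
  have : (gaussianPDF 0 1) = fun z => ((gaussianPDFReal 0 1 z).toNNReal : ENNReal) := rfl
  rw [this, integral_withDensity_eq_integral_smul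
    ((measurable_gaussianPDFReal 0 1).real_toNNReal) f]
  congr 1 with z
  simp [NNReal.smul_def, Real.coe_toNNReal _ (gaussianPDFReal_nonneg 0 1 z),
    stdPDF_eq_gauss, mul_comm]
  exact Or.inl (stdPDF_nonneg z)

lemma integrable_gaussianReal_iff (f : ℝ → ℝ) :
    Integrable f (gaussianReal 0 1) ↔ Integrable (fun z => f z * stdPDF z) := by
  rw [gaussianReal_of_var_ne_zero 0 (one_ne_zero : (1:NNReal) ≠ 0)]
  rw [integrable_withDensity_iff (measurable_gaussianPDF 0 1)
    (Filter.Eventually.of_forall fun z => ENNReal.ofReal_lt_top)]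
  simp_rw [gaussianPDF, ENNReal.toReal_ofReal (gaussianPDFReal_nonneg 0 1 _), stdPDF_eq_gauss]

lemma exp_mul_stdPDF (s z : ℝ) :
    Real.exp (s * z) * stdPDF z = Real.exp (s ^ 2 / 2) * stdPDF (z - s) := by
  simp only [stdPDF, ← mul_div_assoc, ← Real.exp_add]
  congr 1
  ring

lemma integrable_exp_mul_stdPDF (s : ℝ) :
    Integrable (fun z => Real.exp (s * z) * stdPDF z) := by
  simp_rw [exp_mul_stdPDF s]
  exact ((integrable_stdPDF.comp_sub_right s).const_mul _)

lemma integral_exp_mul_stdPDF (s : ℝ) :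
    ∫ z, Real.exp (s * z) * stdPDF z = Real.exp (s ^ 2 / 2) := by
  simp_rw [exp_mul_stdPDF s]
  rw [integral_const_mul, integral_sub_right_eq_self stdPDF s, integral_stdPDF, mul_one]

lemma setIntegral_comp_sub (f : ℝ → ℝ) (c s : ℝ) :
    ∫ z in Ici c, f (z - s) = ∫ z in Ici (c - s), f z := by
  have h : ∀ z, (Ici c).indicator (fun z => f (z - s)) z
      = (Ici (c - s)).indicator f (z - s) := by
    intro z
    simp only [Set.indicator_apply, Set.mem_Ici, sub_le_sub_iff_right]
  rw [← integral_indicator measurableSet_Ici, ← integral_indicator measurableSet_Ici]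
  simp_rw [h]
  exact integral_sub_right_eq_self ((Ici (c - s)).indicator f) s

lemma integral_Ici_exp_mul_stdPDF (s c : ℝ) :
    ∫ z in Ici c, Real.exp (s * z) * stdPDF z
      = Real.exp (s ^ 2 / 2) * stdNormalCDF (s - c) := by
  simp_rw [exp_mul_stdPDF s]
  rw [integral_const_mul, setIntegral_comp_sub stdPDF c s, integral_Ici_stdPDF, neg_sub]

lemma bs_core_itm (a K m s : ℝ) (ha : 0 < a) (hK : K ≤ 0) :
    ∫ z, max (a * Real.exp (m + s * z) - K) 0 * stdPDF z
      = a * Real.exp (m + s ^ 2 / 2) - K := by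
  have hmax : ∀ z, max (a * Real.exp (m + s * z) - K) 0 = a * Real.exp (m + s * z) - K := by
    intro z
    exact max_eq_left (by nlinarith [Real.exp_pos (m + s * z), mul_pos ha (Real.exp_pos (m + s*z))])
  simp_rw [hmax, sub_mul, Real.exp_add, mul_assoc]
  rw [integral_sub (((integrable_exp_mul_stdPDF s).const_mul _).const_mul _)
      (integrable_stdPDF.const_mul _)]
  rw [integral_const_mul, integral_const_mul, integral_const_mul,
    integral_exp_mul_stdPDF, integral_stdPDF]
  ring

lemma bs_core (a K m s : ℝ) (ha : 0 < a) (hK : 0 < K) (hs : 0 < s) :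
    ∫ z, max (a * Real.exp (m + s * z) - K) 0 * stdPDF z
      = a * Real.exp (m + s ^ 2 / 2) * stdNormalCDF (s - (Real.log (K / a) - m) / s)
        - K * stdNormalCDF (-((Real.log (K / a) - m) / s)) := by
  set z₀ : ℝ := (Real.log (K / a) - m) / s with hz₀
  have hkey : ∀ z, m + s * z ≥ Real.log (K / a) ↔ z₀ ≤ z := by
    intro z
    rw [hz₀, div_le_iff₀ hs, ge_iff_le, ← sub_le_iff_le_add', mul_comm]
  have hind : ∀ z, max (a * Real.exp (m + s * z) - K) 0 * stdPDF z
      = (Ici z₀).indicator (fun z => (a * Real.exp (m + s * z) - K) * stdPDF z) z := by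
    intro z
    by_cases hz : z₀ ≤ z
    · rw [Set.indicator_of_mem (Set.mem_Ici.mpr hz)]
      congr 1
      refine max_eq_left (sub_nonneg.2 ?_)
      have h1 : Real.log (K / a) ≤ m + s * z := (hkey z).2 hz
      calc K = a * (K / a) := by field_simp
        _ = a * Real.exp (Real.log (K / a)) := by rw [Real.exp_log (div_pos hK ha)]
        _ ≤ a * Real.exp (m + s * z) := by
            exact mul_le_mul_of_nonneg_left (Real.exp_le_exp.2 h1) ha.le
    · rw [Set.indicator_of_notMem (fun h => hz (Set.mem_Ici.mp h))]
      have h1 : m + s * z < Real.log (K / a) := by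
        by_contra h; exact hz ((hkey z).1 (not_lt.1 h))
      have h2 : a * Real.exp (m + s * z) < K := by
        have := Real.exp_lt_exp.2 h1
        rw [Real.exp_log (div_pos hK ha)] at this
        calc a * Real.exp (m + s * z) < a * (K / a) := by
              exact mul_lt_mul_of_pos_left this ha
          _ = K := by field_simp
      rw [max_eq_right (by linarith), zero_mul]
  simp_rw [hind]
  rw [integral_indicator measurableSet_Ici]
  have : ∀ z, (a * Real.exp (m + s * z) - K) * stdPDF z
      = (a * Real.exp m) * (Real.exp (s * z) * stdPDF z) - K * stdPDF z := by
    intro z; rw [Real.exp_add]; ring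
  simp_rw [this]
  rw [integral_sub (((integrable_exp_mul_stdPDF s).const_mul _).integrableOn)
      ((integrable_stdPDF.const_mul _).integrableOn),
    integral_const_mul, integral_const_mul, integral_Ici_exp_mul_stdPDF,
    integral_Ici_stdPDF]
  rw [Real.exp_add]
  ring

lemma inner_integral (r σ τ₂ E : ℝ) (hσ : 0 < σ) (hτ : 0 < τ₂) (hE : 0 < E)
    (y : ℝ) (hy : 0 < y) :
    ∫ z, Real.exp (-(r * τ₂)) *
        max ((y + y * Real.exp ((r - σ ^ 2 / 2) * τ₂ + σ * Real.sqrt τ₂ * z)) / 2 - E) 0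
        ∂(gaussianReal 0 1)
      = (if y < 2 * E then (1 / 2) * bsCall r σ τ₂ y (2 * E - y)
          else (1 / 2) * (y + Real.exp (-(r * τ₂)) * (y - 2 * E))) := by
  set s : ℝ := σ * Real.sqrt τ₂ with hsdef
  set m : ℝ := (r - σ ^ 2 / 2) * τ₂ with hmdef
  set K : ℝ := 2 * E - y with hKdef
  have hs : 0 < s := mul_pos hσ (Real.sqrt_pos.2 hτ)
  have hs2 : s ^ 2 = σ ^ 2 * τ₂ := by
    rw [hsdef, mul_pow, Real.sq_sqrt hτ.le]
  have hms : m + s ^ 2 / 2 = r * τ₂ := by rw [hs2, hmdef]; ring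
  have h1 : Real.exp (-(r * τ₂)) * Real.exp (r * τ₂) = 1 := by
    rw [← Real.exp_add]; simp
  have hpt : ∀ z : ℝ, Real.exp (-(r * τ₂)) *
      max ((y + y * Real.exp (m + s * z)) / 2 - E) 0
      = Real.exp (-(r * τ₂)) * (1/2) * max (y * Real.exp (m + s * z) - K) 0 := by
    intro z
    have : (y + y * Real.exp (m + s * z)) / 2 - E = (1/2) * (y * Real.exp (m + s * z) - K) := by
      rw [hKdef]; ring
    rw [this, ← mul_zero (1/2 : ℝ), ← mul_max_of_nonneg _ _ (by norm_num : (0:ℝ) ≤ 1/2)]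
    ring
  rw [integral_gaussianReal_eq]
  simp_rw [hpt, mul_assoc (Real.exp (-(r*τ₂)) * (1/2))]
  rw [integral_const_mul]
  by_cases hcase : y < 2 * E
  · have hK : 0 < K := by rw [hKdef]; linarith
    rw [bs_core y K m s hy hK hs, if_pos hcase]
    have hnum : Real.log (y / K) + (r + σ ^ 2 / 2) * τ₂ = Real.log (y / K) + m + s ^ 2 := by
      rw [hs2, hmdef]; ring
    have hd1 : s - (Real.log (K / y) - m) / s = bsD1 r σ τ₂ y K := by
      rw [bsD1, ← hsdef, hnum, Real.log_div hK.ne' hy.ne', Real.log_div hy.ne' hK.ne']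
      field_simp
      ring
    have hd2 : -((Real.log (K / y) - m) / s) = bsD2 r σ τ₂ y K := by
      rw [bsD2, ← hd1]; ring
    rw [hd1, hd2, hms, bsCall]
    linear_combination (1/2 * y * stdNormalCDF (bsD1 r σ τ₂ y K)) * h1
  · have hK : K ≤ 0 := by rw [hKdef]; linarith
    rw [bs_core_itm y K m s hy hK, if_neg hcase, hms, hKdef]
    linear_combination (1/2 * y) * h1

theorem asian_two_obs_tower_reduction
    {Ω : Type*} {mΩ : MeasurableSpace Ω} {μ : Measure Ω} [IsProbabilityMeasure μ]
    (r σ : ℝ) (hσ : 0 < σ) (E : ℝ) (hE : 0 < E)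
    (T₁ T₂ : ℝ) (hT₁ : 0 < T₁) (hT₁₂ : T₁ < T₂)
    (τ₂ : ℝ) (hτ₂ : τ₂ = T₂ - T₁)
    (Z₁ Z₂ : Ω → ℝ) (hZ₁_meas : Measurable Z₁) (hZ₂_meas : Measurable Z₂)
    (hindep : IndepFun Z₁ Z₂ μ)
    (hZ₁ : μ.map Z₁ = gaussianReal 0 1) (hZ₂ : μ.map Z₂ = gaussianReal 0 1)
    (x : ℝ) (hx : 0 < x)
    (S₁ S₂ : Ω → ℝ)
    (hS₁ : ∀ ω, S₁ ω = x * Real.exp ((r - σ ^ 2 / 2) * T₁ + σ * Real.sqrt T₁ * Z₁ ω))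
    (hS₂ : ∀ ω, S₂ ω = S₁ ω * Real.exp ((r - σ ^ 2 / 2) * τ₂ + σ * Real.sqrt τ₂ * Z₂ ω))
    (g : ℝ → ℝ)
    (hg : ∀ y : ℝ, 0 < y →
        g y = if y < 2 * E then (1 / 2) * bsCall r σ τ₂ y (2 * E - y)
              else (1 / 2) * (y + Real.exp (-(r * τ₂)) * (y - 2 * E))) :
    (∫ ω, Real.exp (-(r * T₂)) * max ((S₁ ω + S₂ ω) / 2 - E) 0 ∂μ)
      = Real.exp (-(r * T₁)) * ∫ ω, g (S₁ ω) ∂μ := by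
  have hτ : 0 < τ₂ := by rw [hτ₂]; linarith
  set γ : Measure ℝ := gaussianReal 0 1 with hγ
  set α : ℝ := (r - σ ^ 2 / 2) * T₁ with hα
  set β : ℝ := σ * Real.sqrt T₁ with hβ
  set m : ℝ := (r - σ ^ 2 / 2) * τ₂ with hm
  set s : ℝ := σ * Real.sqrt τ₂ with hs
  set h : ℝ → ℝ := fun y => if y < 2 * E then (1 / 2) * bsCall r σ τ₂ y (2 * E - y)
      else (1 / 2) * (y + Real.exp (-(r * τ₂)) * (y - 2 * E)) with hh
  -- measurability of h
  have hmeas_h : Measurable h := by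
    apply Measurable.ite (measurableSet_lt measurable_id measurable_const)
    · apply Measurable.const_mul
      unfold bsCall bsD2 bsD1
      have hlog : Measurable fun a : ℝ =>
          (Real.log (a / (2 * E - a)) + (r + σ ^ 2 / 2) * τ₂) / (σ * Real.sqrt τ₂) :=
        ((Real.measurable_log.comp (measurable_id.div
          (measurable_const.sub measurable_id))).add_const _).div_const _
      apply Measurable.sub
      · exact measurable_id.mul (stdNormalCDF_measurable.comp hlog)
      · exact (((measurable_const.sub measurable_id).mul measurable_const).mul
          (stdNormalCDF_measurable.comp (hlog.sub_const _)))
    · fun_prop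
  have hSpos : ∀ ω, 0 < S₁ ω := fun ω => by
    rw [hS₁]; positivity
  -- RHS rewriting
  have hgh : ∀ ω, g (S₁ ω) = h (S₁ ω) := fun ω => hg _ (hSpos ω)
  have hRHS : ∫ ω, g (S₁ ω) ∂μ = ∫ z, h (x * Real.exp (α + β * z)) ∂γ := by
    have hmap1 := integral_map (μ := μ) hZ₁_meas.aemeasurable
      (f := fun z => h (x * Real.exp (α + β * z)))
      ((hmeas_h.comp (by fun_prop :
        Measurable fun z : ℝ => x * Real.exp (α + β * z))).aestronglyMeasurable)
    rw [hZ₁] at hmap1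
    rw [integral_congr_ae (Filter.Eventually.of_forall hgh), hmap1]
    refine integral_congr_ae (Filter.Eventually.of_forall fun ω => ?_)
    simp only [hS₁]
  -- LHS rewriting to product measure
  set F : ℝ × ℝ → ℝ := fun p => Real.exp (-(r * T₂)) *
      max ((x * Real.exp (α + β * p.1) +
        x * Real.exp (α + β * p.1) * Real.exp (m + s * p.2)) / 2 - E) 0 with hF
  have hFmeas : Measurable F := by
    apply Measurable.const_mul
    apply Measurable.max _ measurable_const
    fun_prop
  have hmap : μ.map (fun ω => (Z₁ ω, Z₂ ω)) = γ.prod γ := by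
    nth_rewrite 2 [← hZ₂]
    nth_rewrite 1 [← hZ₁]
    exact (indepFun_iff_map_prod_eq_prod_map_map hZ₁_meas.aemeasurable
      hZ₂_meas.aemeasurable).1 hindep
  have hexpInt : ∀ c : ℝ, Integrable (fun z => Real.exp (c * z)) γ :=
    fun c => (integrable_gaussianReal_iff _).2 (integrable_exp_mul_stdPDF c)
  have hFint : Integrable F (γ.prod γ) := by
    set c₁ : ℝ := Real.exp (-(r * T₂)) * x * Real.exp α / 2 with hc₁
    have hc₁pos : 0 < c₁ := by positivity
    have hG : Integrable (fun p : ℝ × ℝ =>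
        c₁ * Real.exp (β * p.1) + c₁ * Real.exp m * (Real.exp (β * p.1) * Real.exp (s * p.2)))
        (γ.prod γ) := by
      apply Integrable.add
      · have := ((hexpInt β).mul_prod (integrable_const (μ := γ) (1:ℝ))).const_mul c₁
        simpa using this
      · exact ((hexpInt β).mul_prod (hexpInt s)).const_mul _
    refine hG.mono' hFmeas.aestronglyMeasurable
      (Filter.Eventually.of_forall fun p => ?_)
    have hA : 0 ≤ (x * Real.exp (α + β * p.1) +
        x * Real.exp (α + β * p.1) * Real.exp (m + s * p.2)) / 2 := by positivity
    have hFnn : 0 ≤ F p := by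
      apply mul_nonneg (Real.exp_nonneg _) (le_max_right _ _)
    rw [Real.norm_eq_abs, abs_of_nonneg hFnn, hF]
    have hmax : max ((x * Real.exp (α + β * p.1) +
        x * Real.exp (α + β * p.1) * Real.exp (m + s * p.2)) / 2 - E) 0
        ≤ (x * Real.exp (α + β * p.1) +
        x * Real.exp (α + β * p.1) * Real.exp (m + s * p.2)) / 2 := by
      apply max_le (by linarith) hA
    calc Real.exp (-(r * T₂)) * max _ 0 ≤ Real.exp (-(r * T₂)) * ((x * Real.exp (α + β * p.1) +
          x * Real.exp (α + β * p.1) * Real.exp (m + s * p.2)) / 2) :=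
        mul_le_mul_of_nonneg_left hmax (Real.exp_nonneg _)
      _ = c₁ * Real.exp (β * p.1) + c₁ * Real.exp m * (Real.exp (β * p.1) * Real.exp (s * p.2)) := by
          rw [hc₁, Real.exp_add, Real.exp_add]; ring
  have hLHS1 : ∫ ω, Real.exp (-(r * T₂)) * max ((S₁ ω + S₂ ω) / 2 - E) 0 ∂μ
      = ∫ p, F p ∂(γ.prod γ) := by
    rw [← hmap, integral_map (hZ₁_meas.prodMk hZ₂_meas).aemeasurable
      hFmeas.aestronglyMeasurable]
    refine integral_congr_ae (Filter.Eventually.of_forall fun ω => ?_)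
    simp only [hF, hS₂, hS₁]
  -- Fubini and inner integral
  have hT₂eq : -(r * T₂) = -(r * T₁) + -(r * τ₂) := by rw [hτ₂]; ring
  have hinner : ∀ z₁ : ℝ, ∫ z₂, F (z₁, z₂) ∂γ
      = Real.exp (-(r * T₁)) * h (x * Real.exp (α + β * z₁)) := by
    intro z₁
    set y : ℝ := x * Real.exp (α + β * z₁) with hy
    have hypos : 0 < y := by positivity
    have hFpt : ∀ z₂, F (z₁, z₂)
        = Real.exp (-(r * T₁)) * (Real.exp (-(r * τ₂)) *
            max ((y + y * Real.exp (m + s * z₂)) / 2 - E) 0) := by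
      intro z₂
      rw [hF]
      simp only []
      rw [hT₂eq, Real.exp_add]
      ring
    simp_rw [hFpt]
    rw [integral_const_mul, inner_integral r σ τ₂ E hσ hτ hE y hypos]
  have hLHS2 : ∫ p, F p ∂(γ.prod γ)
      = Real.exp (-(r * T₁)) * ∫ z, h (x * Real.exp (α + β * z)) ∂γ := by
    rw [integral_prod F hFint]
    simp_rw [hinner]
    rw [integral_const_mul]
  rw [hLHS1, hLHS2, hRHS]
end
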